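/- Fix a real 𝔞 > 10 and β ≥ 1, and set λ = 𝔞/2 + 5. There exists a constant c > 0 (depending only on 𝔞 and β) such that for every κ ∈ (0,1], every square-summable a : ℤ² → ℂ with a(0) = 0 that is not identically zero, and every integer M ≥ max(2, M^{(β)}(a)), setting T = λ κ^{−1} M^{−2} log M, one has: ∑_{ℓ∈ℤ², 0<|ℓ|≤√2} ∑_{k∈ℤ²∖{0}, k≠ℓ} ( (1 − |k|²/|ℓ−k|²) ⟨k⊥,ℓ⟩ )² · |a(ℓ−k)|² · |k|^{−(𝔞+2)} · ∫₀ᵀ ( ∫ₛᵀ e^{−κ|ℓ|²(T−r)} e^{−κ|ℓ−k|² r} e^{−|k|²(r−s)} dr )² ds ≥ c κ^{−1} M^{−6} ∑_{m∈ℤ²∖{0}} |m|^{−(𝔞+2)} |a(m)|². -/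

import Mathlib

open scoped ENNReal
open MeasureTheory intervalIntegral

/-- Squared Euclidean norm of a lattice point `k ∈ ℤ²`. -/
noncomputable def nsq (k : ℤ × ℤ) : ℝ := (k.1 : ℝ) ^ 2 + (k.2 : ℝ) ^ 2

/-- Standard inner product on `ℝ²` of two lattice points. -/
noncomputable def dotp (k l : ℤ × ℤ) : ℝ := (k.1 : ℝ) * (l.1 : ℝ) + (k.2 : ℝ) * (l.2 : ℝ)

/-- The rotation `k⊥ = (k₂, −k₁)`. -/
def perp (k : ℤ × ℤ) : ℤ × ℤ := (k.2, -k.1)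

/-- The spectral `β`-quantile `M^{(β)}(a)`: the least `N ∈ ℕ`, `N ≥ 1`, such that
`∑_{|k|>N} |a k|² ≤ β² ∑_{0<|k|≤N} |a k|²`. -/
noncomputable def specQuantile (β : ℝ) (a : ℤ × ℤ → ℂ) : ℕ :=
  sInf {N : ℕ | 1 ≤ N ∧
    (∑' k : ℤ × ℤ, if (N : ℝ) ^ 2 < nsq k then ‖a k‖ ^ 2 else 0) ≤
      β ^ 2 * ∑' k : ℤ × ℤ, if k ≠ 0 ∧ nsq k ≤ (N : ℝ) ^ 2 then ‖a k‖ ^ 2 else 0}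



set_option maxHeartbeats 1000000 in
lemma timeIntegral_lb (𝔞 κ : ℝ) (h𝔞 : 10 < 𝔞) (hκ0 : 0 < κ) (hκ1 : κ ≤ 1)
    (M : ℕ) (hM : 2 ≤ M) (T : ℝ)
    (hT : T = (𝔞 / 2 + 5) * κ⁻¹ * ((M : ℝ) ^ 2)⁻¹ * Real.log M)
    (nl nm nk : ℝ) (hnl0 : 0 ≤ nl) (hnl : nl ≤ 2) (hnm1 : 1 ≤ nm)
    (hnm : nm ≤ (M : ℝ) ^ 2) (hnk1 : 1 ≤ nk) (hnk : nk ≤ 3 * (M : ℝ) ^ 2) :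
    Real.exp (-(2 * 𝔞 + 24)) * (1 / 18) * κ⁻¹ * ((M : ℝ) ^ 6)⁻¹ ≤
      ∫ s in (0 : ℝ)..T, (∫ r in s..T,
        Real.exp (-κ * nl * (T - r)) * Real.exp (-κ * nm * r) *
          Real.exp (-nk * (r - s))) ^ 2 := by
  have hM2 : (2 : ℝ) ≤ (M : ℝ) := by exact_mod_cast hM
  have hMpos : (0 : ℝ) < (M : ℝ) := by linarith
  have hM2pos : (0 : ℝ) < (M : ℝ) ^ 2 := by positivity
  have hlog2 : (0.6931471803 : ℝ) < Real.log 2 := Real.log_two_gt_d9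
  have hlogM : (0.6931471803 : ℝ) < Real.log M := by
    calc (0.6931471803 : ℝ) < Real.log 2 := hlog2
    _ ≤ Real.log M := Real.log_le_log (by norm_num) hM2
  have hlogM0 : 0 < Real.log M := by linarith
  have hlam : (10 : ℝ) < 𝔞 / 2 + 5 := by linarith
  have hκinv : (1 : ℝ) ≤ κ⁻¹ := by
    nlinarith [inv_pos.mpr hκ0, mul_inv_cancel₀ (ne_of_gt hκ0)]
  have hT0 : 0 < T := by rw [hT]; positivity
  -- log M ≤ M
  have hlogle : Real.log M ≤ (M : ℝ) := by
    have := Real.log_le_sub_one_of_pos hMpos; linarith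
  -- κ T ≤ λ
  have hκT : κ * T ≤ 𝔞 / 2 + 5 := by
    rw [hT]
    have h1 : κ * ((𝔞 / 2 + 5) * κ⁻¹ * ((M : ℝ) ^ 2)⁻¹ * Real.log M)
        = (𝔞 / 2 + 5) * (Real.log M / (M : ℝ) ^ 2) := by
      field_simp
    rw [h1]
    have h2 : Real.log M / (M : ℝ) ^ 2 ≤ 1 := by
      rw [div_le_one hM2pos]
      nlinarith
    nlinarith
  set σ : ℝ := min (2 * κ * nm)⁻¹ (T / 2) with hσdef
  set ρ : ℝ := min nk⁻¹ σ with hρdef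
  have hσ0 : 0 < σ := lt_min (by positivity) (by linarith)
  have hρ0 : 0 < ρ := lt_min (by positivity) hσ0
  have hρσ : ρ ≤ σ := min_le_right _ _
  have hσT2 : σ ≤ T / 2 := min_le_right _ _
  have hσρT : σ + ρ ≤ T := by linarith
  -- the time-shifted kernel
  set G : ℝ → ℝ := fun r => Real.exp (-κ * nl * (T - r)) * Real.exp (-κ * nm * r) *
      Real.exp (-nk * r) with hGdef
  have hGcont : Continuous G := by fun_prop
  have hGint : ∀ a b : ℝ, IntervalIntegrable G volume a b := fun a b =>
    hGcont.intervalIntegrable a b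
  have hgcont : ∀ s : ℝ, Continuous fun r => Real.exp (-κ * nl * (T - r)) *
      Real.exp (-κ * nm * r) * Real.exp (-nk * (r - s)) := fun s => by fun_prop
  have hinner_eq : ∀ s : ℝ, (∫ r in s..T, Real.exp (-κ * nl * (T - r)) *
      Real.exp (-κ * nm * r) * Real.exp (-nk * (r - s)))
      = Real.exp (nk * s) * ((∫ r in (0:ℝ)..T, G r) - ∫ r in (0:ℝ)..s, G r) := by
    intro s
    have h1 : ∀ r : ℝ, Real.exp (-κ * nl * (T - r)) * Real.exp (-κ * nm * r) *
        Real.exp (-nk * (r - s)) = Real.exp (nk * s) * G r := by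
      intro r
      rw [hGdef]
      simp only []
      rw [show -nk * (r - s) = nk * s + -nk * r by ring, Real.exp_add]
      ring
    rw [intervalIntegral.integral_congr (fun r _ => h1 r),
      intervalIntegral.integral_const_mul,
      intervalIntegral.integral_interval_sub_left (hGint 0 T) (hGint 0 s)]
  have hFcont : Continuous fun s => (∫ r in s..T, Real.exp (-κ * nl * (T - r)) *
      Real.exp (-κ * nm * r) * Real.exp (-nk * (r - s))) ^ 2 := by
    have hc : Continuous fun s : ℝ => Real.exp (nk * s) *
        ((∫ r in (0:ℝ)..T, G r) - ∫ r in (0:ℝ)..s, G r) := by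
      apply Continuous.mul
      · fun_prop
      · exact Continuous.sub continuous_const (intervalIntegral.continuous_primitive hGint 0)
    have heq : (fun s => (∫ r in s..T, Real.exp (-κ * nl * (T - r)) *
        Real.exp (-κ * nm * r) * Real.exp (-nk * (r - s))) ^ 2)
        = fun s => (Real.exp (nk * s) *
          ((∫ r in (0:ℝ)..T, G r) - ∫ r in (0:ℝ)..s, G r)) ^ 2 := by
      funext s; rw [hinner_eq s]
    rw [heq]
    exact hc.pow 2
  -- pointwise lower bound on the integrand of the inner integral
  have hg_lb : ∀ s ∈ Set.Icc (0:ℝ) σ, ∀ r ∈ Set.Icc s (s + ρ),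
      Real.exp (-(𝔞 + 12)) ≤ Real.exp (-κ * nl * (T - r)) * Real.exp (-κ * nm * r) *
        Real.exp (-nk * (r - s)) := by
    intro s hs r hr
    obtain ⟨hs0, hsσ⟩ := hs
    obtain ⟨hrs, hrρ⟩ := hr
    rw [← Real.exp_add, ← Real.exp_add]
    apply Real.exp_le_exp.mpr
    have hrT : r ≤ T := by linarith
    have hr0 : 0 ≤ r := by linarith
    have h1 : κ * nl * (T - r) ≤ 𝔞 + 10 := by
      have e0 : (0:ℝ) ≤ T - r := by linarith
      have e1 : κ * nl * (T - r) ≤ κ * 2 * (T - r) := by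
        nlinarith [mul_nonneg (mul_nonneg (le_of_lt hκ0) (show (0:ℝ) ≤ 2 - nl by linarith)) e0]
      have e2 : κ * 2 * (T - r) ≤ 2 * (κ * T) := by nlinarith [mul_nonneg (le_of_lt hκ0) hr0]
      linarith
    have h2 : κ * nm * r ≤ 1 := by
      have hσ1 : σ ≤ (2 * κ * nm)⁻¹ := min_le_left _ _
      have hx : (0:ℝ) < 2 * κ * nm := by positivity
      have hxx : (2 * κ * nm) * (2 * κ * nm)⁻¹ = 1 := mul_inv_cancel₀ (ne_of_gt hx)
      have hr2σ : r ≤ 2 * σ := by linarith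
      have e1 : κ * nm * r ≤ κ * nm * (2 * σ) := by
        have := mul_le_mul_of_nonneg_left hr2σ (by positivity : (0:ℝ) ≤ κ * nm)
        linarith
      have e2 : (2 * κ * nm) * σ ≤ (2 * κ * nm) * (2 * κ * nm)⁻¹ :=
        mul_le_mul_of_nonneg_left hσ1 (le_of_lt hx)
      nlinarith
    have h3 : nk * (r - s) ≤ 1 := by
      have hρ1 : ρ ≤ nk⁻¹ := min_le_left _ _
      have hxx : nk * nk⁻¹ = 1 := mul_inv_cancel₀ (by positivity)
      have e1 : nk * (r - s) ≤ nk * ρ := by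
        have := mul_le_mul_of_nonneg_left (show r - s ≤ ρ by linarith)
          (by positivity : (0:ℝ) ≤ nk)
        linarith
      have e2 : nk * ρ ≤ nk * nk⁻¹ :=
        mul_le_mul_of_nonneg_left hρ1 (by positivity)
      linarith
    nlinarith [h1, h2, h3]
  -- inner integral lower bound
  have hinner_lb : ∀ s ∈ Set.Icc (0:ℝ) σ, ρ * Real.exp (-(𝔞 + 12)) ≤
      ∫ r in s..T, Real.exp (-κ * nl * (T - r)) * Real.exp (-κ * nm * r) *
        Real.exp (-nk * (r - s)) := by
    intro s hs
    obtain ⟨hs0, hsσ⟩ := hs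
    have hsρT : s + ρ ≤ T := by linarith
    have hsplit : (∫ r in s..T, Real.exp (-κ * nl * (T - r)) * Real.exp (-κ * nm * r) *
        Real.exp (-nk * (r - s)))
        = (∫ r in s..(s+ρ), Real.exp (-κ * nl * (T - r)) * Real.exp (-κ * nm * r) *
            Real.exp (-nk * (r - s)))
          + ∫ r in (s+ρ)..T, Real.exp (-κ * nl * (T - r)) * Real.exp (-κ * nm * r) *
            Real.exp (-nk * (r - s)) :=
      (intervalIntegral.integral_add_adjacent_intervals
        ((hgcont s).intervalIntegrable _ _) ((hgcont s).intervalIntegrable _ _)).symm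
    have h2nn : 0 ≤ ∫ r in (s+ρ)..T, Real.exp (-κ * nl * (T - r)) *
        Real.exp (-κ * nm * r) * Real.exp (-nk * (r - s)) :=
      intervalIntegral.integral_nonneg (by linarith) (fun r _ => by positivity)
    have h1lb : ρ * Real.exp (-(𝔞 + 12)) ≤ ∫ r in s..(s+ρ),
        Real.exp (-κ * nl * (T - r)) * Real.exp (-κ * nm * r) * Real.exp (-nk * (r - s)) := by
      have hmono := intervalIntegral.integral_mono_on (by linarith : s ≤ s + ρ)
        (_root_.intervalIntegrable_const (μ := volume) (c := Real.exp (-(𝔞 + 12))))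
        ((hgcont s).intervalIntegrable _ _) (hg_lb s ⟨hs0, hsσ⟩)
      rw [intervalIntegral.integral_const] at hmono
      have : (s + ρ - s) • Real.exp (-(𝔞 + 12)) = ρ * Real.exp (-(𝔞 + 12)) := by
        rw [smul_eq_mul]; ring
      linarith [hmono, this.ge.trans hmono]
    linarith
  -- outer integral lower bound
  have houter : σ * (ρ * Real.exp (-(𝔞 + 12))) ^ 2 ≤
      ∫ s in (0:ℝ)..T, (∫ r in s..T, Real.exp (-κ * nl * (T - r)) *
        Real.exp (-κ * nm * r) * Real.exp (-nk * (r - s))) ^ 2 := by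
    have hσT : σ ≤ T := by linarith
    have hsplit := (intervalIntegral.integral_add_adjacent_intervals
      (hFcont.intervalIntegrable (μ := volume) (0:ℝ) σ) (hFcont.intervalIntegrable (μ := volume) σ T)).symm
    have h2nn : 0 ≤ ∫ s in σ..T, (∫ r in s..T, Real.exp (-κ * nl * (T - r)) *
        Real.exp (-κ * nm * r) * Real.exp (-nk * (r - s))) ^ 2 :=
      intervalIntegral.integral_nonneg hσT (fun s _ => by positivity)
    have h1lb : σ * (ρ * Real.exp (-(𝔞 + 12))) ^ 2 ≤
        ∫ s in (0:ℝ)..σ, (∫ r in s..T, Real.exp (-κ * nl * (T - r)) *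
          Real.exp (-κ * nm * r) * Real.exp (-nk * (r - s))) ^ 2 := by
      have hmono := intervalIntegral.integral_mono_on (le_of_lt hσ0)
        (_root_.intervalIntegrable_const (μ := volume) (c := (ρ * Real.exp (-(𝔞 + 12))) ^ 2))
        (hFcont.intervalIntegrable _ _)
        (fun s hs => by
          have := hinner_lb s hs
          have hnn : 0 ≤ ρ * Real.exp (-(𝔞 + 12)) := by positivity
          exact pow_le_pow_left₀ hnn this 2)
      rw [intervalIntegral.integral_const] at hmono
      have heq : (σ - 0) • (ρ * Real.exp (-(𝔞 + 12))) ^ 2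
          = σ * (ρ * Real.exp (-(𝔞 + 12))) ^ 2 := by rw [smul_eq_mul]; ring
      linarith [heq.ge.trans hmono]
    rw [hsplit]
    linarith
  -- numeric bounds on σ and ρ
  have hMinv : (0:ℝ) < ((M:ℝ)^2)⁻¹ := by positivity
  have hσlb : (1/2) * κ⁻¹ * ((M:ℝ)^2)⁻¹ ≤ σ := by
    apply le_min
    · have h1 : (2 * κ * nm) ≤ 2 * κ * (M:ℝ)^2 := by nlinarith
      have h2 : (2 * κ * (M:ℝ)^2)⁻¹ ≤ (2 * κ * nm)⁻¹ :=
        inv_anti₀ (by positivity) h1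
      have h3 : (2 * κ * (M:ℝ)^2)⁻¹ = (1/2) * κ⁻¹ * ((M:ℝ)^2)⁻¹ := by
        rw [mul_inv, mul_inv]; norm_num
      linarith
    · rw [hT]
      have : (1:ℝ) ≤ (𝔞 / 2 + 5) * Real.log M := by nlinarith
      have hpos : (0:ℝ) < κ⁻¹ * ((M:ℝ)^2)⁻¹ := by positivity
      nlinarith
  have hρlb : (1/3) * ((M:ℝ)^2)⁻¹ ≤ ρ := by
    apply le_min
    · have h1 : (3 * (M:ℝ)^2)⁻¹ ≤ nk⁻¹ := inv_anti₀ (by positivity) hnk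
      have h2 : (3 * (M:ℝ)^2)⁻¹ = (1/3) * ((M:ℝ)^2)⁻¹ := by rw [mul_inv]; norm_num
      linarith
    · nlinarith [hσlb, hκinv, hMinv]
  -- final computation
  have hexp2 : (Real.exp (-(𝔞 + 12))) ^ 2 = Real.exp (-(2 * 𝔞 + 24)) := by
    rw [sq, ← Real.exp_add]; ring_nf
  have hM6 : ((M:ℝ)^2)⁻¹ * (((M:ℝ)^2)⁻¹ * ((M:ℝ)^2)⁻¹) = ((M:ℝ)^6)⁻¹ := by
    rw [← mul_inv, ← mul_inv, ← pow_add, ← pow_add]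
  calc Real.exp (-(2 * 𝔞 + 24)) * (1 / 18) * κ⁻¹ * ((M : ℝ) ^ 6)⁻¹
      ≤ σ * (ρ * Real.exp (-(𝔞 + 12))) ^ 2 := by
        have hrw : σ * (ρ * Real.exp (-(𝔞 + 12))) ^ 2
            = (σ * ρ ^ 2) * Real.exp (-(2 * 𝔞 + 24)) := by
          rw [mul_pow, hexp2]; ring
        rw [hrw]
        have hkey : (1 / 18) * κ⁻¹ * ((M : ℝ) ^ 6)⁻¹ ≤ σ * ρ ^ 2 := by
          have hρ2 : (1/9) * (((M:ℝ)^2)⁻¹ * ((M:ℝ)^2)⁻¹) ≤ ρ ^ 2 := by nlinarith [hρlb, hMinv, hρ0]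
          have hσκ : (0:ℝ) < κ⁻¹ := by positivity
          calc (1 / 18) * κ⁻¹ * ((M : ℝ) ^ 6)⁻¹
              = ((1/2) * κ⁻¹ * ((M:ℝ)^2)⁻¹) * ((1/9) * (((M:ℝ)^2)⁻¹ * ((M:ℝ)^2)⁻¹)) := by
                rw [← hM6]; ring
            _ ≤ σ * ρ ^ 2 := by
                apply mul_le_mul hσlb hρ2 (by positivity) (le_of_lt hσ0)
        nlinarith [Real.exp_pos (-(2 * 𝔞 + 24)), hkey]
    _ ≤ _ := houter



/-- The integer multiplier numerator `(2⟨ℓ,m⟩ − |ℓ|²)(m₁ℓ₂ − m₂ℓ₁)`. -/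
def fmul (l m : ℤ × ℤ) : ℤ :=
  (2 * (l.1 * m.1 + l.2 * m.2) - (l.1 ^ 2 + l.2 ^ 2)) * (m.1 * l.2 - m.2 * l.1)

/-- Choice of a good small frequency `ℓ` for a given `m`. -/
def chooseL (m : ℤ × ℤ) : ℤ × ℤ :=
  if m.1 ^ 2 + m.2 ^ 2 ≤ 4 * |m.1 * m.2| then
    (if 0 ≤ m.1 then (-1, 0) else (1, 0))
  else
    (if 0 ≤ m.1 + m.2 then (-1, -1) else (1, 1))

lemma chooseL_nsq (m : ℤ × ℤ) : chooseL m ≠ 0 ∧ nsq (chooseL m) ≤ 2 := by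
  unfold chooseL
  split_ifs <;> simp [nsq] <;> norm_num

lemma dichotomy (x y : ℤ) (h : ¬ (x = 0 ∧ y = 0)) (h1 : ¬ (x ^ 2 + y ^ 2 ≤ 4 * |x * y|)) :
    x ^ 2 + y ^ 2 ≤ 4 * |x ^ 2 - y ^ 2| := by
  by_contra h2
  push_neg at h1 h2
  have hs : 0 < x ^ 2 + y ^ 2 := by
    rcases (not_and_or.mp h) with hx | hy
    · positivity
    · positivity
  nlinarith [sq_abs (x * y), sq_abs (x ^ 2 - y ^ 2), abs_nonneg (x * y),
    abs_nonneg (x ^ 2 - y ^ 2), sq_nonneg (x ^ 2 - y ^ 2), sq_nonneg (2 * x * y)]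

/-- Geometric non-degeneracy: the chosen `ℓ` gives a numerator of size `≥ |m|²/2`. -/
lemma nondeg (m : ℤ × ℤ) (hm : m ≠ 0) :
    m.1 ^ 2 + m.2 ^ 2 ≤ 2 * |fmul (chooseL m) m| := by
  obtain ⟨x, y⟩ := m
  have hxy : ¬ (x = 0 ∧ y = 0) := by
    intro ⟨hx, hy⟩; exact hm (by simp [hx, hy, Prod.ext_iff])
  unfold chooseL fmul
  by_cases hcase : x ^ 2 + y ^ 2 ≤ 4 * |x * y|
  · rw [if_pos hcase]
    by_cases hx : 0 ≤ x
    · rw [if_pos hx]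
      simp only []
      -- f = (2(−x) − 1)(x·0 − y·(−1)) = (−2x−1)·y ; |f| = (2x+1)|y|
      have : (2 * ((-1) * x + 0 * y) - ((-1:ℤ) ^ 2 + 0 ^ 2)) * (x * 0 - y * (-1))
          = -((2*x+1) * y) := by ring
      rw [this, abs_neg, abs_mul]
      have h1 : |2*x+1| = 2*x+1 := abs_of_nonneg (by linarith)
      rw [h1]
      have h2 : 2 * |x * y| ≤ (2*x+1) * |y| := by
        rw [abs_mul, abs_of_nonneg hx]
        nlinarith [abs_nonneg y]
      linarith
    · rw [if_neg hx]
      push_neg at hx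
      simp only []
      have : (2 * ((1:ℤ) * x + 0 * y) - ((1:ℤ) ^ 2 + 0 ^ 2)) * (x * 0 - y * 1)
          = -((2*x-1) * y) := by ring
      rw [this, abs_neg, abs_mul]
      have h1 : |2*x-1| = -(2*x-1) := abs_of_nonpos (by linarith)
      rw [h1]
      have h2 : 2 * |x * y| ≤ (-(2*x-1)) * |y| := by
        rw [abs_mul, abs_of_neg hx]
        nlinarith [abs_nonneg y]
      linarith
  · rw [if_neg hcase]
    have hdich := dichotomy x y hxy hcase
    by_cases hx : 0 ≤ x + y
    · rw [if_pos hx]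
      simp only []
      have : (2 * ((-1) * x + (-1) * y) - ((-1:ℤ) ^ 2 + (-1) ^ 2)) * (x * (-1) - y * (-1))
          = (2*(x+y)+2) * (x - y) := by ring
      rw [this, abs_mul]
      have h1 : |2*(x+y)+2| = 2*(x+y)+2 := abs_of_nonneg (by linarith)
      rw [h1]
      have h2 : 2 * |x^2 - y^2| ≤ (2*(x+y)+2) * |x - y| := by
        have : |x^2 - y^2| = |x+y| * |x-y| := by rw [← abs_mul]; ring_nf
        rw [this, abs_of_nonneg hx]
        nlinarith [abs_nonneg (x - y)]
      linarith
    · rw [if_neg hx]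
      push_neg at hx
      simp only []
      have : (2 * ((1:ℤ) * x + 1 * y) - ((1:ℤ) ^ 2 + 1 ^ 2)) * (x * 1 - y * 1)
          = (2*(x+y)-2) * (x - y) := by ring
      rw [this, abs_mul]
      have h1 : |2*(x+y)-2| = -(2*(x+y)-2) := abs_of_nonpos (by linarith)
      rw [h1]
      have h2 : 2 * |x^2 - y^2| ≤ (-(2*(x+y)-2)) * |x - y| := by
        have : |x^2 - y^2| = |x+y| * |x-y| := by rw [← abs_mul]; ring_nf
        rw [this, abs_of_neg hx]
        nlinarith [abs_nonneg (x - y)]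
      linarith


lemma nsq_nonneg (k : ℤ × ℤ) : 0 ≤ nsq k := by unfold nsq; positivity

lemma one_le_nsq (k : ℤ × ℤ) (hk : k ≠ 0) : (1 : ℝ) ≤ nsq k := by
  have h : (1 : ℤ) ≤ k.1 ^ 2 + k.2 ^ 2 := by
    rcases (not_and_or.mp (fun ⟨h1, h2⟩ => hk (Prod.ext h1 h2))) with h | h
    · nlinarith [Int.one_le_abs h, sq_abs k.1, sq_nonneg k.2, abs_nonneg k.1]
    · nlinarith [Int.one_le_abs h, sq_abs k.2, sq_nonneg k.1, abs_nonneg k.2]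
  have : ((1 : ℤ) : ℝ) ≤ ((k.1 ^ 2 + k.2 ^ 2 : ℤ) : ℝ) := by exact_mod_cast h
  unfold nsq; push_cast at this ⊢; linarith

section quantile
variable (β : ℝ) (a : ℤ × ℤ → ℂ)

lemma summable_ite (hsum : Summable fun k => ‖a k‖ ^ 2) (P : ℤ × ℤ → Prop) [DecidablePred P] :
    Summable fun k => if P k then ‖a k‖ ^ 2 else 0 := by
  apply Summable.of_nonneg_of_le (fun k => by split_ifs <;> positivity)
    (fun k => by split_ifs <;> simp [sq_nonneg]) hsum

lemma quantile_at_M (hβ : 1 ≤ β) (hsum : Summable fun k => ‖a k‖ ^ 2) (h0 : a 0 = 0)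
    (hne : a ≠ 0) (M : ℕ) (hQ : specQuantile β a ≤ M) :
    (∑' k : ℤ × ℤ, if (M : ℝ) ^ 2 < nsq k then ‖a k‖ ^ 2 else 0) ≤
      β ^ 2 * ∑' k : ℤ × ℤ, if k ≠ 0 ∧ nsq k ≤ (M : ℝ) ^ 2 then ‖a k‖ ^ 2 else 0 := by
  classical
  -- the defining set is nonempty
  obtain ⟨m₀, hm₀⟩ : ∃ m, a m ≠ 0 := by
    by_contra h; push_neg at h; exact hne (funext h)
  have hm₀0 : m₀ ≠ 0 := fun h => hm₀ (h ▸ h0)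
  have hε : (0 : ℝ) < ‖a m₀‖ ^ 2 := by
    have := norm_pos_iff.mpr hm₀; positivity
  obtain ⟨s, hs⟩ := ((tendsto_tsum_compl_atTop_zero (fun k => ‖a k‖ ^ 2)).eventually_lt_const
    hε).exists
  set N : ℕ := s.sup (fun k => k.1.natAbs + k.2.natAbs) + (m₀.1.natAbs + m₀.2.natAbs) + 1
    with hNdef
  have habs : ∀ k : ℤ × ℤ, ∀ n : ℕ, k.1.natAbs + k.2.natAbs ≤ n → nsq k ≤ (n : ℝ) ^ 2 := by
    intro k n hn
    have h1 : (k.1.natAbs : ℝ) + (k.2.natAbs : ℝ) ≤ (n : ℝ) := by exact_mod_cast hn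
    have e1 : (k.1.natAbs : ℝ) = |(k.1 : ℝ)| := by rw [Nat.cast_natAbs, Int.cast_abs]
    have e2 : (k.2.natAbs : ℝ) = |(k.2 : ℝ)| := by rw [Nat.cast_natAbs, Int.cast_abs]
    unfold nsq
    nlinarith [sq_abs (k.1 : ℝ), sq_abs (k.2 : ℝ), abs_nonneg (k.1 : ℝ), abs_nonneg (k.2 : ℝ),
      mul_nonneg (abs_nonneg (k.1 : ℝ)) (abs_nonneg (k.2 : ℝ))]
  have hmem : ∀ k ∈ s, nsq k ≤ (N : ℝ) ^ 2 := by
    intro k hk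
    apply habs
    have h := Finset.le_sup (f := fun k : ℤ × ℤ => k.1.natAbs + k.2.natAbs) hk
    omega
  have hm₀N : nsq m₀ ≤ (N : ℝ) ^ 2 := habs m₀ N (by omega)
  have htail : (∑' k : ℤ × ℤ, if (N : ℝ) ^ 2 < nsq k then ‖a k‖ ^ 2 else 0) ≤
      ∑' k : ℤ × ℤ, if k ∉ s then ‖a k‖ ^ 2 else 0 := by
    apply Summable.tsum_le_tsum _ (summable_ite a hsum _) (summable_ite a hsum _)
    intro k
    by_cases h1 : (N : ℝ) ^ 2 < nsq k
    · rw [if_pos h1]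
      by_cases h2 : k ∉ s
      · rw [if_pos h2]
      · exact absurd (hmem k (not_not.mp h2)) (not_le.mpr h1)
    · rw [if_neg h1]
      split_ifs <;> positivity
  have htail2 : (∑' k : ℤ × ℤ, if k ∉ s then ‖a k‖ ^ 2 else 0) < ‖a m₀‖ ^ 2 := by
    have he : (∑' (x : {x : ℤ × ℤ // x ∉ s}), ‖a (x : ℤ × ℤ)‖ ^ 2)
        = ∑' k : ℤ × ℤ, Set.indicator {x : ℤ × ℤ | x ∉ s} (fun k => ‖a k‖ ^ 2) k :=
      tsum_subtype {x : ℤ × ℤ | x ∉ s} (fun k => ‖a k‖ ^ 2)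
    have he2 : (∑' k : ℤ × ℤ, Set.indicator {x : ℤ × ℤ | x ∉ s} (fun k => ‖a k‖ ^ 2) k)
        = ∑' k : ℤ × ℤ, if k ∉ s then ‖a k‖ ^ 2 else 0 := by
      apply tsum_congr; intro k
      rw [Set.indicator_apply]
      simp [Set.mem_setOf_eq]
    calc (∑' k : ℤ × ℤ, if k ∉ s then ‖a k‖ ^ 2 else 0)
        = ∑' (x : {x : ℤ × ℤ // x ∉ s}), ‖a (x : ℤ × ℤ)‖ ^ 2 := by rw [he, he2]
      _ < ‖a m₀‖ ^ 2 := hs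
  have hbulk : ‖a m₀‖ ^ 2 ≤
      ∑' k : ℤ × ℤ, if k ≠ 0 ∧ nsq k ≤ (N : ℝ) ^ 2 then ‖a k‖ ^ 2 else 0 := by
    have := Summable.le_tsum (summable_ite a hsum (fun k => k ≠ 0 ∧ nsq k ≤ (N : ℝ) ^ 2)) m₀
      (fun j _ => by split_ifs <;> positivity)
    rwa [if_pos ⟨hm₀0, hm₀N⟩] at this
  have hNmem : N ∈ {N : ℕ | 1 ≤ N ∧
      (∑' k : ℤ × ℤ, if (N : ℝ) ^ 2 < nsq k then ‖a k‖ ^ 2 else 0) ≤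
        β ^ 2 * ∑' k : ℤ × ℤ, if k ≠ 0 ∧ nsq k ≤ (N : ℝ) ^ 2 then ‖a k‖ ^ 2 else 0} := by
    refine ⟨by omega, ?_⟩
    have hβ2 : (1 : ℝ) ≤ β ^ 2 := by nlinarith
    have hb0 : 0 ≤ ∑' k : ℤ × ℤ, if k ≠ 0 ∧ nsq k ≤ (N : ℝ) ^ 2 then ‖a k‖ ^ 2 else 0 :=
      tsum_nonneg (fun k => by split_ifs <;> positivity)
    nlinarith [htail, htail2, hbulk]
  -- the quantile N₀ := sInf ≤ M satisfies the inequality; transfer to M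
  have hN₀ := Nat.sInf_mem (Set.nonempty_of_mem hNmem)
  have hrfl : specQuantile β a = sInf {N : ℕ | 1 ≤ N ∧
      (∑' k : ℤ × ℤ, if (N : ℝ) ^ 2 < nsq k then ‖a k‖ ^ 2 else 0) ≤
        β ^ 2 * ∑' k : ℤ × ℤ, if k ≠ 0 ∧ nsq k ≤ (N : ℝ) ^ 2 then ‖a k‖ ^ 2 else 0} := rfl
  rw [← hrfl] at hN₀
  set N₀ := specQuantile β a with hN₀def
  obtain ⟨hN₀1, hN₀ineq⟩ := hN₀
  have hcast : ((N₀ : ℝ)) ^ 2 ≤ ((M : ℝ)) ^ 2 := by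
    have : (N₀ : ℝ) ≤ (M : ℝ) := by exact_mod_cast hQ
    have h0' : (0:ℝ) ≤ (N₀ : ℝ) := by positivity
    nlinarith
  have h1 : (∑' k : ℤ × ℤ, if (M : ℝ) ^ 2 < nsq k then ‖a k‖ ^ 2 else 0) ≤
      ∑' k : ℤ × ℤ, if (N₀ : ℝ) ^ 2 < nsq k then ‖a k‖ ^ 2 else 0 := by
    apply Summable.tsum_le_tsum _ (summable_ite a hsum _) (summable_ite a hsum _)
    intro k
    by_cases ha : (M : ℝ) ^ 2 < nsq k
    · rw [if_pos ha, if_pos (lt_of_le_of_lt hcast ha)]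
    · rw [if_neg ha]
      split_ifs <;> positivity
  have h2 : (∑' k : ℤ × ℤ, if k ≠ 0 ∧ nsq k ≤ (N₀ : ℝ) ^ 2 then ‖a k‖ ^ 2 else 0) ≤
      ∑' k : ℤ × ℤ, if k ≠ 0 ∧ nsq k ≤ (M : ℝ) ^ 2 then ‖a k‖ ^ 2 else 0 := by
    apply Summable.tsum_le_tsum _ (summable_ite a hsum _) (summable_ite a hsum _)
    intro k
    by_cases ha : k ≠ 0 ∧ nsq k ≤ (N₀ : ℝ) ^ 2
    · rw [if_pos ha, if_pos ⟨ha.1, le_trans ha.2 hcast⟩]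
    · rw [if_neg ha]
      split_ifs <;> positivity
  have hβ2 : (0 : ℝ) ≤ β ^ 2 := by positivity
  calc (∑' k : ℤ × ℤ, if (M : ℝ) ^ 2 < nsq k then ‖a k‖ ^ 2 else 0)
      ≤ ∑' k : ℤ × ℤ, if (N₀ : ℝ) ^ 2 < nsq k then ‖a k‖ ^ 2 else 0 := h1
    _ ≤ β ^ 2 * ∑' k : ℤ × ℤ, if k ≠ 0 ∧ nsq k ≤ (N₀ : ℝ) ^ 2 then ‖a k‖ ^ 2 else 0 := hN₀ineq
    _ ≤ _ := mul_le_mul_of_nonneg_left h2 hβ2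

end quantile

set_option maxHeartbeats 2000000 in
lemma weighted_quantile (𝔞 β : ℝ) (h𝔞 : 10 < 𝔞) (hβ : 1 ≤ β) (a : ℤ × ℤ → ℂ)
    (hsum : Summable fun k => ‖a k‖ ^ 2) (h0 : a 0 = 0) (hne : a ≠ 0)
    (M : ℕ) (hM : 2 ≤ M) (hQ : specQuantile β a ≤ M) :
    (∑' m : ℤ × ℤ, if m ≠ 0 then (nsq m) ^ (-((𝔞 + 2) / 2)) * ‖a m‖ ^ 2 else 0) ≤
      (1 + β ^ 2) * ∑' m : ℤ × ℤ,
        if m ≠ 0 ∧ nsq m ≤ (M : ℝ) ^ 2 then (nsq m) ^ (-((𝔞 + 2) / 2)) * ‖a m‖ ^ 2 else 0 := by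
  set p : ℝ := (𝔞 + 2) / 2 with hpdef
  have hp0 : 0 < p := by rw [hpdef]; linarith
  have hpneg : -p ≤ 0 := by linarith
  set w : ℤ × ℤ → ℝ := fun m => (nsq m) ^ (-p) * ‖a m‖ ^ 2 with hwdef
  have hw_nonneg : ∀ m, 0 ≤ w m := fun m => by
    apply mul_nonneg (Real.rpow_nonneg (nsq_nonneg m) _) (sq_nonneg _)
  have hw_le : ∀ m, m ≠ 0 → w m ≤ ‖a m‖ ^ 2 := by
    intro m hm
    have h1 : (nsq m) ^ (-p) ≤ 1 :=
      Real.rpow_le_one_of_one_le_of_nonpos (one_le_nsq m hm) hpneg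
    have h2 : (nsq m) ^ (-p) * ‖a m‖ ^ 2 ≤ 1 * ‖a m‖ ^ 2 :=
      mul_le_mul_of_nonneg_right h1 (sq_nonneg _)
    show (nsq m) ^ (-p) * ‖a m‖ ^ 2 ≤ ‖a m‖ ^ 2
    linarith
  -- summability of all restricted sums
  have hnsq0 : nsq (0 : ℤ × ℤ) = 0 := by simp [nsq]
  have hS1 : Summable fun m => if m ≠ 0 then w m else 0 := by
    refine Summable.of_nonneg_of_le
      (fun m => by split_ifs <;> [exact hw_nonneg m; exact le_rfl]) (fun m => ?_) hsum
    by_cases h : m ≠ 0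
    · rw [if_pos h]; exact hw_le m h
    · rw [if_neg h]; positivity
  have hS2 : Summable fun m => if m ≠ 0 ∧ nsq m ≤ (M : ℝ) ^ 2 then w m else 0 := by
    refine Summable.of_nonneg_of_le
      (fun m => by split_ifs <;> [exact hw_nonneg m; exact le_rfl]) (fun m => ?_) hsum
    by_cases h : m ≠ 0 ∧ nsq m ≤ (M : ℝ) ^ 2
    · rw [if_pos h]; exact hw_le m h.1
    · rw [if_neg h]; positivity
  have hS3 : Summable fun m => if (M : ℝ) ^ 2 < nsq m then w m else 0 := by
    refine Summable.of_nonneg_of_le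
      (fun m => by split_ifs <;> [exact hw_nonneg m; exact le_rfl]) (fun m => ?_) hsum
    by_cases h : (M : ℝ) ^ 2 < nsq m
    · rw [if_pos h]
      apply hw_le
      intro hm0
      rw [hm0, hnsq0] at h
      nlinarith [sq_nonneg (M : ℝ)]
    · rw [if_neg h]; positivity
  -- split the total sum
  have hsplit : ∀ m : ℤ × ℤ, (if m ≠ 0 then w m else 0) =
      (if m ≠ 0 ∧ nsq m ≤ (M : ℝ) ^ 2 then w m else 0) +
        (if (M : ℝ) ^ 2 < nsq m then w m else 0) := by
    intro m
    by_cases hm : m = 0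
    · subst hm
      have h1 : ¬((0 : ℤ × ℤ) ≠ 0) := by simp
      rw [if_neg h1, if_neg (fun h : (0:ℤ×ℤ) ≠ 0 ∧ _ => h1 h.1),
        if_neg (by rw [hnsq0]; push_neg; positivity)]
      ring
    · by_cases hle : nsq m ≤ (M : ℝ) ^ 2
      · rw [if_pos hm, if_pos ⟨hm, hle⟩, if_neg (not_lt.mpr hle)]; ring
      · rw [if_pos hm, if_neg (fun h => hle h.2), if_pos (not_le.mp hle)]; ring
  have htot : (∑' m : ℤ × ℤ, if m ≠ 0 then w m else 0) =
      (∑' m : ℤ × ℤ, if m ≠ 0 ∧ nsq m ≤ (M : ℝ) ^ 2 then w m else 0) +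
        ∑' m : ℤ × ℤ, if (M : ℝ) ^ 2 < nsq m then w m else 0 := by
    rw [← Summable.tsum_add hS2 hS3]
    exact tsum_congr hsplit
  -- tail bound
  have hM2pos : (0 : ℝ) < (M : ℝ) ^ 2 := by
    have : (0:ℝ) < (M:ℝ) := by exact_mod_cast Nat.lt_of_lt_of_le (by norm_num) hM
    positivity
  have hc := Real.rpow_nonneg (le_of_lt hM2pos) (-p)
  have htailW : (∑' m : ℤ × ℤ, if (M : ℝ) ^ 2 < nsq m then w m else 0) ≤
      ((M : ℝ) ^ 2) ^ (-p) *
        ∑' k : ℤ × ℤ, if (M : ℝ) ^ 2 < nsq k then ‖a k‖ ^ 2 else 0 := by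
    rw [← tsum_mul_left]
    apply Summable.tsum_le_tsum _ hS3
      ((summable_ite a hsum _).mul_left _)
    intro m
    by_cases h : (M : ℝ) ^ 2 < nsq m
    · rw [if_pos h, if_pos h, hwdef]
      simp only
      apply mul_le_mul_of_nonneg_right _ (sq_nonneg _)
      exact Real.rpow_le_rpow_of_nonpos hM2pos (le_of_lt h) hpneg
    · rw [if_neg h, if_neg h, mul_zero]
  have hbulkW : ((M : ℝ) ^ 2) ^ (-p) *
      (∑' k : ℤ × ℤ, if k ≠ 0 ∧ nsq k ≤ (M : ℝ) ^ 2 then ‖a k‖ ^ 2 else 0) ≤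
      ∑' m : ℤ × ℤ, if m ≠ 0 ∧ nsq m ≤ (M : ℝ) ^ 2 then w m else 0 := by
    rw [← tsum_mul_left]
    apply Summable.tsum_le_tsum _ ((summable_ite a hsum _).mul_left _) hS2
    intro m
    by_cases h : m ≠ 0 ∧ nsq m ≤ (M : ℝ) ^ 2
    · rw [if_pos h, if_pos h, hwdef]
      simp only
      apply mul_le_mul_of_nonneg_right _ (sq_nonneg _)
      exact Real.rpow_le_rpow_of_nonpos (lt_of_lt_of_le one_pos (one_le_nsq m h.1)) h.2 hpneg
    · rw [if_neg h, if_neg h, mul_zero]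
  have hq := quantile_at_M β a hβ hsum h0 hne M hQ
  have hβ2 : (0:ℝ) ≤ β ^ 2 := sq_nonneg β
  have hbulk_nonneg : 0 ≤ ∑' m : ℤ × ℤ, if m ≠ 0 ∧ nsq m ≤ (M : ℝ) ^ 2 then w m else 0 :=
    tsum_nonneg (fun m => by split_ifs <;> [exact hw_nonneg m; exact le_rfl])
  have chain : (∑' m : ℤ × ℤ, if (M : ℝ) ^ 2 < nsq m then w m else 0) ≤
      β ^ 2 * ∑' m : ℤ × ℤ, if m ≠ 0 ∧ nsq m ≤ (M : ℝ) ^ 2 then w m else 0 := by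
    calc (∑' m : ℤ × ℤ, if (M : ℝ) ^ 2 < nsq m then w m else 0)
        ≤ ((M : ℝ) ^ 2) ^ (-p) *
          ∑' k : ℤ × ℤ, if (M : ℝ) ^ 2 < nsq k then ‖a k‖ ^ 2 else 0 := htailW
      _ ≤ ((M : ℝ) ^ 2) ^ (-p) * (β ^ 2 *
          ∑' k : ℤ × ℤ, if k ≠ 0 ∧ nsq k ≤ (M : ℝ) ^ 2 then ‖a k‖ ^ 2 else 0) :=
          mul_le_mul_of_nonneg_left hq hc
      _ = β ^ 2 * (((M : ℝ) ^ 2) ^ (-p) *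
          ∑' k : ℤ × ℤ, if k ≠ 0 ∧ nsq k ≤ (M : ℝ) ^ 2 then ‖a k‖ ^ 2 else 0) := by ring
      _ ≤ β ^ 2 * ∑' m : ℤ × ℤ, if m ≠ 0 ∧ nsq m ≤ (M : ℝ) ^ 2 then w m else 0 :=
          mul_le_mul_of_nonneg_left hbulkW hβ2
  simp only [hwdef] at htot chain hbulk_nonneg
  rw [htot]
  nlinarith [chain, hbulk_nonneg]


lemma fmul_self (m : ℤ × ℤ) : fmul m m = 0 := by unfold fmul; ring

lemma int_one_le_sq (m : ℤ × ℤ) (hm : m ≠ 0) : (1 : ℤ) ≤ m.1 ^ 2 + m.2 ^ 2 := by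
  rcases (not_and_or.mp (fun ⟨h1, h2⟩ => hm (Prod.ext h1 h2))) with h | h
  · nlinarith [Int.one_le_abs h, sq_abs m.1, sq_nonneg m.2, abs_nonneg m.1]
  · nlinarith [Int.one_le_abs h, sq_abs m.2, sq_nonneg m.1, abs_nonneg m.2]

lemma chooseL_sub_ne_zero (m : ℤ × ℤ) (hm : m ≠ 0) : chooseL m - m ≠ 0 := by
  intro h
  have hLm : chooseL m = m := by rwa [sub_eq_zero] at h
  have h0 := nondeg m hm
  rw [hLm, fmul_self] at h0
  simp at h0
  have := int_one_le_sq m hm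
  omega

set_option maxHeartbeats 1000000 in
/-- Per-mode lower bound: for `0 < |m| ≤ M`, the chosen `ℓ = chooseL m`, `k = ℓ − m`
contributes at least a fixed multiple of `κ⁻¹ M⁻⁶ |m|^{−(𝔞+2)} |a m|²`. -/
lemma per_m (𝔞 : ℝ) (h𝔞 : 10 < 𝔞) (κ : ℝ) (hκ0 : 0 < κ) (hκ1 : κ ≤ 1) (M : ℕ) (hM : 2 ≤ M)
    (T : ℝ) (hT : T = (𝔞 / 2 + 5) * κ⁻¹ * ((M : ℝ) ^ 2)⁻¹ * Real.log M)
    (a : ℤ × ℤ → ℂ) (m : ℤ × ℤ) (hm : m ≠ 0) (hmM : nsq m ≤ (M : ℝ) ^ 2) :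
    (1 / 4) * ((6 : ℝ) ^ (-((𝔞 + 2) / 2)) * (Real.exp (-(2 * 𝔞 + 24)) * (1 / 18))) *
      (κ⁻¹ * ((M : ℝ) ^ 6)⁻¹) * ((nsq m) ^ (-((𝔞 + 2) / 2)) * ‖a m‖ ^ 2) ≤
    ((1 - nsq (chooseL m - m) / nsq (chooseL m - (chooseL m - m))) *
        dotp (perp (chooseL m - m)) (chooseL m)) ^ 2 *
      ‖a (chooseL m - (chooseL m - m))‖ ^ 2 * (nsq (chooseL m - m)) ^ (-((𝔞 + 2) / 2)) *
      ∫ s in (0 : ℝ)..T,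
        (∫ r in s..T,
          Real.exp (-κ * nsq (chooseL m) * (T - r)) *
            Real.exp (-κ * nsq (chooseL m - (chooseL m - m)) * r) *
              Real.exp (-nsq (chooseL m - m) * (r - s))) ^ 2 := by
  have hsub : chooseL m - (chooseL m - m) = m := sub_sub_cancel _ _
  rw [hsub]
  obtain ⟨hL0, hL2⟩ := chooseL_nsq m
  have hk0 : chooseL m - m ≠ 0 := chooseL_sub_ne_zero m hm
  have h1m : (1 : ℝ) ≤ nsq m := one_le_nsq m hm
  have hk1 : (1 : ℝ) ≤ nsq (chooseL m - m) := one_le_nsq _ hk0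
  have hnm0 : (0 : ℝ) < nsq m := lt_of_lt_of_le one_pos h1m
  have hM2 : (2 : ℝ) ≤ (M : ℝ) := by exact_mod_cast hM
  have hM2pos : (0 : ℝ) < (M : ℝ) ^ 2 := by positivity
  have hksplit : nsq (chooseL m - m) ≤ 2 * nsq (chooseL m) + 2 * nsq m := by
    unfold nsq
    simp only [Prod.fst_sub, Prod.snd_sub]
    push_cast
    nlinarith [sq_nonneg (((chooseL m).1 : ℝ) + (m.1 : ℝ)), sq_nonneg (((chooseL m).2 : ℝ) + (m.2 : ℝ))]
  have hk6 : nsq (chooseL m - m) ≤ 6 * nsq m := by nlinarith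
  have hk3M : nsq (chooseL m - m) ≤ 3 * (M : ℝ) ^ 2 := by nlinarith
  -- multiplier bound
  have hnd := nondeg m hm
  have hndR : nsq m ≤ 2 * |(fmul (chooseL m) m : ℝ)| := by
    have h2 : ((m.1 ^ 2 + m.2 ^ 2 : ℤ) : ℝ) ≤ ((2 * |fmul (chooseL m) m| : ℤ) : ℝ) := by
      exact_mod_cast hnd
    push_cast at h2
    unfold nsq
    push_cast
    linarith
  have hmult : (1 - nsq (chooseL m - m) / nsq m) * dotp (perp (chooseL m - m)) (chooseL m)
      = (fmul (chooseL m) m : ℝ) / nsq m := by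
    have hne : nsq m ≠ 0 := ne_of_gt hnm0
    unfold nsq at hne ⊢
    unfold dotp perp fmul
    simp only [Prod.fst_sub, Prod.snd_sub]
    push_cast
    field_simp
    ring
  have hmult2 : (1 / 4 : ℝ) ≤ ((1 - nsq (chooseL m - m) / nsq m) *
      dotp (perp (chooseL m - m)) (chooseL m)) ^ 2 := by
    rw [hmult, div_pow, le_div_iff₀ (by positivity)]
    nlinarith [sq_abs ((fmul (chooseL m) m : ℝ)), abs_nonneg ((fmul (chooseL m) m : ℝ)), hndR, hnm0]
  have hrpow : (6 : ℝ) ^ (-((𝔞 + 2) / 2)) * (nsq m) ^ (-((𝔞 + 2) / 2)) ≤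
      (nsq (chooseL m - m)) ^ (-((𝔞 + 2) / 2)) := by
    have h := Real.rpow_le_rpow_of_nonpos (lt_of_lt_of_le one_pos hk1) hk6
      (by linarith : -((𝔞 + 2) / 2) ≤ 0)
    rwa [Real.mul_rpow (by norm_num) (nsq_nonneg m)] at h
  have hI := timeIntegral_lb 𝔞 κ h𝔞 hκ0 hκ1 M hM T hT (nsq (chooseL m)) (nsq m)
    (nsq (chooseL m - m)) (nsq_nonneg _) hL2 h1m hmM hk1 hk3M
  set I : ℝ := ∫ s in (0 : ℝ)..T,
      (∫ r in s..T,
        Real.exp (-κ * nsq (chooseL m) * (T - r)) * Real.exp (-κ * nsq m * r) *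
          Real.exp (-nsq (chooseL m - m) * (r - s))) ^ 2 with hIdef
  set E : ℝ := Real.exp (-(2 * 𝔞 + 24)) * (1 / 18) * κ⁻¹ * ((M : ℝ) ^ 6)⁻¹ with hEdef
  have hE0 : (0 : ℝ) ≤ E := by rw [hEdef]; positivity
  have hI0 : (0 : ℝ) ≤ I := le_trans hE0 hI
  have f3 : ‖a m‖ ^ 2 * E ≤ ‖a m‖ ^ 2 * I := mul_le_mul_of_nonneg_left hI (sq_nonneg _)
  have f23 : ((6 : ℝ) ^ (-((𝔞 + 2) / 2)) * (nsq m) ^ (-((𝔞 + 2) / 2))) * (‖a m‖ ^ 2 * E) ≤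
      (nsq (chooseL m - m)) ^ (-((𝔞 + 2) / 2)) * (‖a m‖ ^ 2 * I) :=
    mul_le_mul hrpow f3 (by positivity) (Real.rpow_nonneg (nsq_nonneg _) _)
  have f123 : (1 / 4 : ℝ) * (((6 : ℝ) ^ (-((𝔞 + 2) / 2)) * (nsq m) ^ (-((𝔞 + 2) / 2))) *
      (‖a m‖ ^ 2 * E)) ≤ ((1 - nsq (chooseL m - m) / nsq m) *
        dotp (perp (chooseL m - m)) (chooseL m)) ^ 2 *
      ((nsq (chooseL m - m)) ^ (-((𝔞 + 2) / 2)) * (‖a m‖ ^ 2 * I)) :=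
    mul_le_mul hmult2 f23 (by positivity) (le_trans (by norm_num) hmult2)
  calc (1 / 4) * ((6 : ℝ) ^ (-((𝔞 + 2) / 2)) * (Real.exp (-(2 * 𝔞 + 24)) * (1 / 18))) *
        (κ⁻¹ * ((M : ℝ) ^ 6)⁻¹) * ((nsq m) ^ (-((𝔞 + 2) / 2)) * ‖a m‖ ^ 2)
      = (1 / 4 : ℝ) * (((6 : ℝ) ^ (-((𝔞 + 2) / 2)) * (nsq m) ^ (-((𝔞 + 2) / 2))) *
        (‖a m‖ ^ 2 * E)) := by rw [hEdef]; ring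
    _ ≤ ((1 - nsq (chooseL m - m) / nsq m) *
          dotp (perp (chooseL m - m)) (chooseL m)) ^ 2 *
        ((nsq (chooseL m - m)) ^ (-((𝔞 + 2) / 2)) * (‖a m‖ ^ 2 * I)) := f123
    _ = _ := by ring


set_option maxHeartbeats 2000000

/-- Deterministic content of Lemma 5.1 (linearised SNS Gaussian lower bound): with
`λ = 𝔞/2 + 5` and `T = λ κ⁻¹ M⁻² log M`, for `M ≥ max(2, M^{(β)}(a))`,
`∑_{0<|ℓ|≤√2} ∑_{k≠0, k≠ℓ} ((1 − |k|²/|ℓ−k|²)⟨k⊥,ℓ⟩)² |a(ℓ−k)|² |k|^{−(𝔞+2)}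
   ∫₀ᵀ (∫ₛᵀ e^{−κ|ℓ|²(T−r)} e^{−κ|ℓ−k|² r} e^{−|k|²(r−s)} dr)² ds
 ≥ c κ⁻¹ M⁻⁶ ∑_{m≠0} |m|^{−(𝔞+2)} |a m|²`. -/
theorem gaussian_lower_bound_linearised_NS (𝔞 : ℝ) (h𝔞 : 10 < 𝔞) (β : ℝ) (hβ : 1 ≤ β) :
    ∃ c : ℝ, 0 < c ∧
      ∀ κ : ℝ, κ ∈ Set.Ioc (0 : ℝ) 1 →
      ∀ a : ℤ × ℤ → ℂ, Summable (fun k => ‖a k‖ ^ 2) → a 0 = 0 → a ≠ 0 →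
      ∀ M : ℕ, 2 ≤ M → specQuantile β a ≤ M →
      ∀ T : ℝ, T = (𝔞 / 2 + 5) * κ⁻¹ * ((M : ℝ) ^ 2)⁻¹ * Real.log M →
      ENNReal.ofReal (c * κ⁻¹ * ((M : ℝ) ^ 6)⁻¹) *
          (∑' m : ℤ × ℤ,
            if m ≠ 0 then ENNReal.ofReal ((nsq m) ^ (-((𝔞 + 2) / 2)) * ‖a m‖ ^ 2) else 0) ≤
        ∑' ℓ : ℤ × ℤ, ∑' k : ℤ × ℤ,
          (if ℓ ≠ 0 ∧ nsq ℓ ≤ 2 ∧ k ≠ 0 ∧ k ≠ ℓ then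
            ENNReal.ofReal
              (((1 - nsq k / nsq (ℓ - k)) * dotp (perp k) ℓ) ^ 2 * ‖a (ℓ - k)‖ ^ 2 *
                (nsq k) ^ (-((𝔞 + 2) / 2)) *
                ∫ s in (0 : ℝ)..T,
                  (∫ r in s..T,
                    Real.exp (-κ * nsq ℓ * (T - r)) * Real.exp (-κ * nsq (ℓ - k) * r) *
                      Real.exp (-nsq k * (r - s))) ^ 2)
          else 0) := by
  have h6pos : (0 : ℝ) < (6 : ℝ) ^ (-((𝔞 + 2) / 2)) := Real.rpow_pos_of_pos (by norm_num) _
  refine ⟨(1 / (1 + β ^ 2)) * ((1 / 4) * ((6 : ℝ) ^ (-((𝔞 + 2) / 2)) *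
      (Real.exp (-(2 * 𝔞 + 24)) * (1 / 18)))), by positivity, ?_⟩
  intro κ hκ a hsum h0 hne M hM hQ T hT
  obtain ⟨hκ0, hκ1⟩ := hκ
  have hMpos : (0 : ℝ) < (M : ℝ) := by
    have : (2:ℝ) ≤ (M:ℝ) := by exact_mod_cast hM
    linarith
  -- abbreviations
  set c2 : ℝ := (1 / 4) * ((6 : ℝ) ^ (-((𝔞 + 2) / 2)) *
      (Real.exp (-(2 * 𝔞 + 24)) * (1 / 18))) with hc2def
  have hc2pos : 0 < c2 := by rw [hc2def]; positivity
  have h1β : (0:ℝ) < 1 + β ^ 2 := by positivity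
  -- summability of the weighted sums
  have hwle : ∀ m : ℤ × ℤ, m ≠ 0 → nsq m ^ (-((𝔞 + 2) / 2)) * ‖a m‖ ^ 2 ≤ ‖a m‖ ^ 2 := by
    intro m hm
    have h1 : nsq m ^ (-((𝔞 + 2) / 2)) ≤ 1 :=
      Real.rpow_le_one_of_one_le_of_nonpos (one_le_nsq m hm) (by linarith)
    nlinarith [sq_nonneg ‖a m‖, Real.rpow_nonneg (nsq_nonneg m) (-((𝔞 + 2) / 2))]
  have hWnn : ∀ m : ℤ × ℤ,
      0 ≤ (if m ≠ 0 then nsq m ^ (-((𝔞 + 2) / 2)) * ‖a m‖ ^ 2 else 0) := fun m => by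
    split_ifs with h
    · exact mul_nonneg (Real.rpow_nonneg (nsq_nonneg m) _) (sq_nonneg _)
    · exact le_rfl
  have hWsum : Summable (fun m : ℤ × ℤ =>
      if m ≠ 0 then nsq m ^ (-((𝔞 + 2) / 2)) * ‖a m‖ ^ 2 else 0) := by
    refine Summable.of_nonneg_of_le hWnn (fun m => ?_) hsum
    by_cases h : m ≠ 0
    · rw [if_pos h]; exact hwle m h
    · rw [if_neg h]; positivity
  have hBnn : ∀ m : ℤ × ℤ,
      0 ≤ (if m ≠ 0 ∧ nsq m ≤ (M : ℝ) ^ 2 then nsq m ^ (-((𝔞 + 2) / 2)) * ‖a m‖ ^ 2 else 0) :=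
    fun m => by
      split_ifs with h
      · exact mul_nonneg (Real.rpow_nonneg (nsq_nonneg m) _) (sq_nonneg _)
      · exact le_rfl
  have hBsum : Summable (fun m : ℤ × ℤ =>
      if m ≠ 0 ∧ nsq m ≤ (M : ℝ) ^ 2 then nsq m ^ (-((𝔞 + 2) / 2)) * ‖a m‖ ^ 2 else 0) := by
    refine Summable.of_nonneg_of_le hBnn (fun m => ?_) hsum
    by_cases h : m ≠ 0 ∧ nsq m ≤ (M : ℝ) ^ 2
    · rw [if_pos h]; exact hwle m h.1
    · rw [if_neg h]; positivity
  -- the elementary real inequality between the two weighted sums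
  have hwq := weighted_quantile 𝔞 β h𝔞 hβ a hsum h0 hne M hM hQ
  -- scalar abbreviation
  set A : ℝ := c2 * (κ⁻¹ * ((M : ℝ) ^ 6)⁻¹) with hAdef
  have hA0 : 0 ≤ A := by
    rw [hAdef]; positivity
  -- the injection m ↦ (ℓ(m), ℓ(m) − m)
  have hι : Function.Injective (fun m : ℤ × ℤ => ((chooseL m, chooseL m - m) :
      (ℤ × ℤ) × (ℤ × ℤ))) := by
    intro m1 m2 h
    have h1 : chooseL m1 = chooseL m2 := congrArg Prod.fst h
    have h2 : chooseL m1 - m1 = chooseL m2 - m2 := congrArg Prod.snd h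
    rw [h1] at h2
    exact sub_right_injective h2
  -- termwise bound
  have hterm : ∀ m : ℤ × ℤ,
      ENNReal.ofReal A * ENNReal.ofReal
        (if m ≠ 0 ∧ nsq m ≤ (M : ℝ) ^ 2 then nsq m ^ (-((𝔞 + 2) / 2)) * ‖a m‖ ^ 2 else 0) ≤
      (if chooseL m ≠ 0 ∧ nsq (chooseL m) ≤ 2 ∧ chooseL m - m ≠ 0 ∧
          chooseL m - m ≠ chooseL m then
        ENNReal.ofReal
          (((1 - nsq (chooseL m - m) / nsq (chooseL m - (chooseL m - m))) *
              dotp (perp (chooseL m - m)) (chooseL m)) ^ 2 *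
            ‖a (chooseL m - (chooseL m - m))‖ ^ 2 *
            (nsq (chooseL m - m)) ^ (-((𝔞 + 2) / 2)) *
            ∫ s in (0 : ℝ)..T,
              (∫ r in s..T,
                Real.exp (-κ * nsq (chooseL m) * (T - r)) *
                  Real.exp (-κ * nsq (chooseL m - (chooseL m - m)) * r) *
                    Real.exp (-nsq (chooseL m - m) * (r - s))) ^ 2)
      else 0) := by
    intro m
    by_cases hcond : m ≠ 0 ∧ nsq m ≤ (M : ℝ) ^ 2
    · obtain ⟨hL0, hL2⟩ := chooseL_nsq m
      have hk0 : chooseL m - m ≠ 0 := chooseL_sub_ne_zero m hcond.1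
      have hkl : chooseL m - m ≠ chooseL m := by
        intro h
        exact hcond.1 (sub_eq_self.mp h)
      rw [if_pos hcond, if_pos ⟨hL0, hL2, hk0, hkl⟩,
        ← ENNReal.ofReal_mul hA0]
      exact ENNReal.ofReal_le_ofReal
        (per_m 𝔞 h𝔞 κ hκ0 hκ1 M hM T hT a m hcond.1 hcond.2)
    · rw [if_neg hcond, ENNReal.ofReal_zero, mul_zero]
      exact zero_le
  -- assemble the chain
  calc ENNReal.ofReal ((1 / (1 + β ^ 2)) * c2 * κ⁻¹ * ((M : ℝ) ^ 6)⁻¹) *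
        (∑' m : ℤ × ℤ,
          if m ≠ 0 then ENNReal.ofReal ((nsq m) ^ (-((𝔞 + 2) / 2)) * ‖a m‖ ^ 2) else 0)
      = ENNReal.ofReal ((1 / (1 + β ^ 2)) * c2 * κ⁻¹ * ((M : ℝ) ^ 6)⁻¹) *
        ENNReal.ofReal (∑' m : ℤ × ℤ,
          if m ≠ 0 then (nsq m) ^ (-((𝔞 + 2) / 2)) * ‖a m‖ ^ 2 else 0) := by
        rw [ENNReal.ofReal_tsum_of_nonneg hWnn hWsum]
        congr 1
        exact tsum_congr fun m => by split_ifs <;> simp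
    _ = ENNReal.ofReal ((1 / (1 + β ^ 2)) * c2 * κ⁻¹ * ((M : ℝ) ^ 6)⁻¹ *
          ∑' m : ℤ × ℤ,
            if m ≠ 0 then (nsq m) ^ (-((𝔞 + 2) / 2)) * ‖a m‖ ^ 2 else 0) := by
        rw [← ENNReal.ofReal_mul (by positivity)]
    _ ≤ ENNReal.ofReal (A * ∑' m : ℤ × ℤ,
          if m ≠ 0 ∧ nsq m ≤ (M : ℝ) ^ 2 then (nsq m) ^ (-((𝔞 + 2) / 2)) * ‖a m‖ ^ 2 else 0) := by
        apply ENNReal.ofReal_le_ofReal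
        have hstep : (1 / (1 + β ^ 2)) * c2 * κ⁻¹ * ((M : ℝ) ^ 6)⁻¹ *
            ((1 + β ^ 2) * ∑' m : ℤ × ℤ,
              if m ≠ 0 ∧ nsq m ≤ (M : ℝ) ^ 2 then (nsq m) ^ (-((𝔞 + 2) / 2)) * ‖a m‖ ^ 2 else 0)
            = A * ∑' m : ℤ × ℤ,
              if m ≠ 0 ∧ nsq m ≤ (M : ℝ) ^ 2 then (nsq m) ^ (-((𝔞 + 2) / 2)) * ‖a m‖ ^ 2 else 0 := by
          rw [hAdef]
          field_simp
        rw [← hstep]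
        apply mul_le_mul_of_nonneg_left hwq (by positivity)
    _ = ENNReal.ofReal A * ∑' m : ℤ × ℤ, ENNReal.ofReal
          (if m ≠ 0 ∧ nsq m ≤ (M : ℝ) ^ 2 then (nsq m) ^ (-((𝔞 + 2) / 2)) * ‖a m‖ ^ 2 else 0) := by
        rw [ENNReal.ofReal_mul hA0, ENNReal.ofReal_tsum_of_nonneg hBnn hBsum]
    _ = ∑' m : ℤ × ℤ, ENNReal.ofReal A * ENNReal.ofReal
          (if m ≠ 0 ∧ nsq m ≤ (M : ℝ) ^ 2 then (nsq m) ^ (-((𝔞 + 2) / 2)) * ‖a m‖ ^ 2 else 0) :=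
        ENNReal.tsum_mul_left.symm
    _ ≤ ∑' m : ℤ × ℤ,
        (if chooseL m ≠ 0 ∧ nsq (chooseL m) ≤ 2 ∧ chooseL m - m ≠ 0 ∧
            chooseL m - m ≠ chooseL m then
          ENNReal.ofReal
            (((1 - nsq (chooseL m - m) / nsq (chooseL m - (chooseL m - m))) *
                dotp (perp (chooseL m - m)) (chooseL m)) ^ 2 *
              ‖a (chooseL m - (chooseL m - m))‖ ^ 2 *
              (nsq (chooseL m - m)) ^ (-((𝔞 + 2) / 2)) *
              ∫ s in (0 : ℝ)..T,
                (∫ r in s..T,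
                  Real.exp (-κ * nsq (chooseL m) * (T - r)) *
                    Real.exp (-κ * nsq (chooseL m - (chooseL m - m)) * r) *
                      Real.exp (-nsq (chooseL m - m) * (r - s))) ^ 2)
        else 0) := ENNReal.tsum_le_tsum hterm
    _ ≤ ∑' q : (ℤ × ℤ) × (ℤ × ℤ),
        (if q.1 ≠ 0 ∧ nsq q.1 ≤ 2 ∧ q.2 ≠ 0 ∧ q.2 ≠ q.1 then
          ENNReal.ofReal
            (((1 - nsq q.2 / nsq (q.1 - q.2)) * dotp (perp q.2) q.1) ^ 2 *
              ‖a (q.1 - q.2)‖ ^ 2 * (nsq q.2) ^ (-((𝔞 + 2) / 2)) *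
              ∫ s in (0 : ℝ)..T,
                (∫ r in s..T,
                  Real.exp (-κ * nsq q.1 * (T - r)) * Real.exp (-κ * nsq (q.1 - q.2) * r) *
                    Real.exp (-nsq q.2 * (r - s))) ^ 2)
        else 0) :=
        ENNReal.tsum_comp_le_tsum_of_injective hι _
    _ = _ := ENNReal.tsum_prod (f := fun ℓ k =>
        if ℓ ≠ 0 ∧ nsq ℓ ≤ 2 ∧ k ≠ 0 ∧ k ≠ ℓ then
          ENNReal.ofReal
            (((1 - nsq k / nsq (ℓ - k)) * dotp (perp k) ℓ) ^ 2 * ‖a (ℓ - k)‖ ^ 2 *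
              (nsq k) ^ (-((𝔞 + 2) / 2)) *
              ∫ s in (0 : ℝ)..T,
                (∫ r in s..T,
                  Real.exp (-κ * nsq ℓ * (T - r)) * Real.exp (-κ * nsq (ℓ - k) * r) *
                    Real.exp (-nsq k * (r - s))) ^ 2)
        else 0)
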